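/- The function ρ_ESH is convex on ℝ. -/
import Mathlib


noncomputable def rhoESH (ε c₁ c₂ u : ℝ) : ℝ :=
  if u < c₁ then c₁ * u / (1 + ε)^2 - c₁^2 / (2 * (1 + ε)^2)
  else if u < 0 then u^2 / (2 * (1 + ε)^2)
  else if u ≤ c₂ then u^2 / (2 * (1 - ε)^2)
  else c₂ * u / (1 - ε)^2 - c₂^2 / (2 * (1 - ε)^2)

/-- derivative candidate, in a form that is obviously monotone -/
noncomputable def rhoESH' (ε c₁ c₂ u : ℝ) : ℝ :=
  max (min u 0) c₁ / (1 + ε)^2 + min (max u 0) c₂ / (1 - ε)^2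

lemma hasDerivAt_lin (a b c u : ℝ) :
    HasDerivAt (fun x => a * x / b - c) (a / b) u := by
  simpa using (((hasDerivAt_id u).const_mul a).div_const b).sub_const c

lemma hasDerivAt_quad (a u : ℝ) :
    HasDerivAt (fun x => x^2 / (2 * a)) (u / a) u := by
  have h : HasDerivAt (fun x => x^2 / (2 * a)) ((↑2 * u ^ (2 - 1)) / (2 * a)) u :=
    (hasDerivAt_pow 2 u).div_const (2 * a)
  convert h using 1
  rcases eq_or_ne a 0 with rfl | ha
  · simp
  · field_simp
    ring

lemma rhoESH_hasDerivAt (ε c₁ c₂ : ℝ) (hε : ε ∈ Set.Ioo (-1 : ℝ) 1)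
    (hc₁ : c₁ < 0) (hc₂ : 0 < c₂) (u : ℝ) :
    HasDerivAt (rhoESH ε c₁ c₂) (rhoESH' ε c₁ c₂ u) u := by
  obtain ⟨hε1, hε2⟩ := hε
  have hp0 : (0:ℝ) < 1 + ε := by linarith
  have hm0 : (0:ℝ) < 1 - ε := by linarith
  have hp : (1 + ε)^2 ≠ 0 := (pow_pos hp0 2).ne'
  have hm : (1 - ε)^2 ≠ 0 := (pow_pos hm0 2).ne'
  rcases lt_trichotomy c₁ u with h1 | rfl | h1
  rotate_left
  · -- u = c₁
    have hval : rhoESH' ε c₁ c₂ c₁ = c₁ / (1 + ε)^2 := by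
      unfold rhoESH'
      rw [min_eq_left hc₁.le, max_self, max_eq_right hc₁.le, min_eq_left (by linarith)]
      simp
    rw [hval]
    have key : ∀ x, x ≤ c₁ → rhoESH ε c₁ c₂ x = c₁ * x / (1+ε)^2 - c₁^2/(2*(1+ε)^2) := by
      intro x hx
      rcases lt_or_eq_of_le hx with hx | rfl
      · simp [rhoESH, hx]
      · simp only [rhoESH, lt_irrefl, if_false, if_pos hc₁]
        field_simp
        ring
    have hIic : HasDerivWithinAt (rhoESH ε c₁ c₂) (c₁/(1+ε)^2) (Set.Iic c₁) c₁ :=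
      ((hasDerivAt_lin c₁ ((1+ε)^2) (c₁^2/(2*(1+ε)^2)) c₁).hasDerivWithinAt).congr
        (fun x hx => key x (Set.mem_Iic.mp hx)) (key c₁ le_rfl)
    have hIci : HasDerivWithinAt (rhoESH ε c₁ c₂) (c₁/(1+ε)^2) (Set.Ici c₁) c₁ := by
      have hq : HasDerivWithinAt (fun x => x^2/(2*(1+ε)^2)) (c₁/(1+ε)^2) (Set.Ici c₁) c₁ :=
        (hasDerivAt_quad ((1+ε)^2) c₁).hasDerivWithinAt
      refine hq.congr_of_eventuallyEq ?_ ?_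
      · filter_upwards [nhdsWithin_le_nhds (eventually_lt_nhds hc₁), self_mem_nhdsWithin]
          with x hx0 hxc
        simp [rhoESH, not_lt.mpr (Set.mem_Ici.mp hxc), hx0]
      · simp [rhoESH, hc₁]
    have := hIic.union hIci
    rwa [Set.Iic_union_Ici, hasDerivWithinAt_univ] at this
  · -- u < c₁
    have : rhoESH' ε c₁ c₂ u = c₁ / (1 + ε)^2 := by
      unfold rhoESH'
      rw [min_eq_left (by linarith), max_eq_right (by linarith),
        max_eq_right (by linarith : u ≤ (0:ℝ)), min_eq_left (by linarith)]
      simp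
    rw [this]
    refine (hasDerivAt_lin c₁ ((1+ε)^2) (c₁^2/(2*(1+ε)^2)) u).congr_of_eventuallyEq ?_
    filter_upwards [eventually_lt_nhds h1] with x hx
    simp [rhoESH, hx]
  rcases lt_trichotomy 0 u with h2 | rfl | h2
  rotate_left
  · -- u = 0
    have : rhoESH' ε c₁ c₂ 0 = 0 := by
      unfold rhoESH'
      rw [min_self, max_eq_left hc₁.le, max_self, min_eq_left hc₂.le]
      simp
    rw [this]
    have hIic : HasDerivWithinAt (rhoESH ε c₁ c₂) 0 (Set.Iic 0) 0 := by
      have hq : HasDerivWithinAt (fun x => x^2/(2*(1+ε)^2)) ((0:ℝ)/(1+ε)^2) (Set.Iic 0) 0 :=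
        (hasDerivAt_quad ((1+ε)^2) 0).hasDerivWithinAt
      rw [zero_div] at hq
      refine hq.congr_of_eventuallyEq ?_ ?_
      · filter_upwards [nhdsWithin_le_nhds (eventually_gt_nhds hc₁), self_mem_nhdsWithin]
          with x hxc hx0
        rcases lt_or_eq_of_le (Set.mem_Iic.mp hx0) with hx | rfl
        · simp [rhoESH, not_lt.mpr hxc.le, hx]
        · simp [rhoESH, not_lt.mpr hc₁.le, hc₂.le]
      · simp [rhoESH, not_lt.mpr hc₁.le, hc₂.le]
    have hIci : HasDerivWithinAt (rhoESH ε c₁ c₂) 0 (Set.Ici 0) 0 := by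
      have hq : HasDerivWithinAt (fun x => x^2/(2*(1-ε)^2)) ((0:ℝ)/(1-ε)^2) (Set.Ici 0) 0 :=
        (hasDerivAt_quad ((1-ε)^2) 0).hasDerivWithinAt
      rw [zero_div] at hq
      refine hq.congr_of_eventuallyEq ?_ ?_
      · filter_upwards [nhdsWithin_le_nhds (eventually_lt_nhds hc₂), self_mem_nhdsWithin]
          with x hxc hx0
        have hx0' : (0:ℝ) ≤ x := Set.mem_Ici.mp hx0
        have h1 : ¬ x < c₁ := by linarith
        simp [rhoESH, h1, not_lt.mpr hx0', hxc.le]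
      · simp [rhoESH, not_lt.mpr hc₁.le, hc₂.le]
    have := hIic.union hIci
    rwa [Set.Iic_union_Ici, hasDerivWithinAt_univ] at this
  · -- c₁ < u < 0
    have : rhoESH' ε c₁ c₂ u = u / (1 + ε)^2 := by
      unfold rhoESH'
      rw [min_eq_left h2.le, max_eq_left h1.le, max_eq_right h2.le, min_eq_left hc₂.le]
      simp
    rw [this]
    refine (hasDerivAt_quad ((1+ε)^2) u).congr_of_eventuallyEq ?_
    filter_upwards [eventually_gt_nhds h1, eventually_lt_nhds h2] with x hx1 hx2
    simp [rhoESH, not_lt.mpr hx1.le, hx2]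
  rcases lt_trichotomy c₂ u with h3 | rfl | h3
  rotate_left
  · -- u = c₂
    have : rhoESH' ε c₁ c₂ c₂ = c₂ / (1 - ε)^2 := by
      unfold rhoESH'
      rw [min_eq_right hc₂.le, max_eq_left hc₁.le, max_eq_left hc₂.le, min_self]
      simp
    rw [this]
    have hIic : HasDerivWithinAt (rhoESH ε c₁ c₂) (c₂/(1-ε)^2) (Set.Iic c₂) c₂ := by
      have hq : HasDerivWithinAt (fun x => x^2/(2*(1-ε)^2)) (c₂/(1-ε)^2) (Set.Iic c₂) c₂ :=
        (hasDerivAt_quad ((1-ε)^2) c₂).hasDerivWithinAt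
      refine hq.congr_of_eventuallyEq ?_ ?_
      · filter_upwards [nhdsWithin_le_nhds (eventually_gt_nhds hc₂), self_mem_nhdsWithin]
          with x hx0 hxc
        have h1 : ¬ x < c₁ := by linarith
        simp [rhoESH, h1, not_lt.mpr hx0.le, (Set.mem_Iic.mp hxc)]
      · have h1 : ¬ c₂ < c₁ := by linarith
        simp [rhoESH, h1, not_lt.mpr hc₂.le]
    have hIci : HasDerivWithinAt (rhoESH ε c₁ c₂) (c₂/(1-ε)^2) (Set.Ici c₂) c₂ := by
      have key : ∀ x, c₂ ≤ x → rhoESH ε c₁ c₂ x = c₂ * x/(1-ε)^2 - c₂^2/(2*(1-ε)^2) := by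
        intro x hx
        rcases lt_or_eq_of_le hx with hx | rfl
        · have h1 : ¬ x < c₁ := by linarith
          have h2 : ¬ x < 0 := by linarith
          simp [rhoESH, h1, h2, not_le.mpr hx]
        · have h1 : ¬ c₂ < c₁ := by linarith
          have h2 : ¬ c₂ < 0 := by linarith
          rw [rhoESH, if_neg h1, if_neg h2, if_pos le_rfl]
          field_simp
          ring
      exact ((hasDerivAt_lin c₂ ((1-ε)^2) (c₂^2/(2*(1-ε)^2)) c₂).hasDerivWithinAt).congr
        (fun x hx => key x (Set.mem_Ici.mp hx)) (key c₂ le_rfl)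
    have := hIic.union hIci
    rwa [Set.Iic_union_Ici, hasDerivWithinAt_univ] at this
  · -- 0 < u < c₂
    have : rhoESH' ε c₁ c₂ u = u / (1 - ε)^2 := by
      unfold rhoESH'
      rw [min_eq_right h2.le, max_eq_left hc₁.le, max_eq_left h2.le, min_eq_left h3.le]
      simp
    rw [this]
    refine (hasDerivAt_quad ((1-ε)^2) u).congr_of_eventuallyEq ?_
    filter_upwards [eventually_gt_nhds h2, eventually_lt_nhds h3] with x hx1 hx2
    have h1 : ¬ x < c₁ := by linarith
    simp [rhoESH, h1, not_lt.mpr hx1.le, hx2.le]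
  · -- u > c₂
    have : rhoESH' ε c₁ c₂ u = c₂ / (1 - ε)^2 := by
      unfold rhoESH'
      rw [min_eq_right h2.le, max_eq_left hc₁.le, max_eq_left h2.le, min_eq_right h3.le]
      simp
    rw [this]
    refine (hasDerivAt_lin c₂ ((1-ε)^2) (c₂^2/(2*(1-ε)^2)) u).congr_of_eventuallyEq ?_
    filter_upwards [eventually_gt_nhds h3] with x hx
    have h1 : ¬ x < c₁ := by linarith
    have h2 : ¬ x < 0 := by linarith
    simp [rhoESH, h1, h2, not_le.mpr hx]

theorem rhoESH_convex (ε c₁ c₂ : ℝ) (hε : ε ∈ Set.Ioo (-1 : ℝ) 1) (hc₁ : c₁ < 0) (hc₂ : 0 < c₂) : ConvexOn ℝ Set.univ (rhoESH ε c₁ c₂) := by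
  have hd := rhoESH_hasDerivAt ε c₁ c₂ hε hc₁ hc₂
  have hdiff : Differentiable ℝ (rhoESH ε c₁ c₂) := fun u => (hd u).differentiableAt
  have hderiv : deriv (rhoESH ε c₁ c₂) = rhoESH' ε c₁ c₂ := funext fun u => (hd u).deriv
  have hmono : Monotone (rhoESH' ε c₁ c₂) := by
    have h1 : Monotone (fun u : ℝ => max (min u 0) c₁ / (1 + ε)^2) :=
      ((monotone_id.min monotone_const).max monotone_const).div_const (sq_nonneg _)
    have h2 : Monotone (fun u : ℝ => min (max u 0) c₂ / (1 - ε)^2) :=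
      ((monotone_id.max monotone_const).min monotone_const).div_const (sq_nonneg _)
    exact h1.add h2
  refine MonotoneOn.convexOn_of_deriv convex_univ hdiff.continuous.continuousOn
    (hdiff.differentiableOn.mono interior_subset) ?_
  rw [hderiv]
  exact hmono.monotoneOn _
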